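/- Let f : ℝⁿ → ℝ be twice continuously differentiable, m > 0, γ ≥ 0, h > 0. Define the Nesterov step in phase space Ψ : ℝⁿ × ℝⁿ → ℝⁿ × ℝⁿ by Ψ(x, p) = (X, P) where x_{1/2} = x + (h/m) e^{−γh} p, P = e^{−γh} p − h ∇f(x_{1/2}), and X = x + (h/m) P. Then for every (x, p) and all tangent vectors ξ = (ξ_x, ξ_p), η = (η_x, η_p) ∈ ℝⁿ × ℝⁿ, the derivative of Ψ satisfies the exact identity ω(DΨ(x,p) ξ, DΨ(x,p) η) = e^{−γh} ω(ξ, η) − (h²/m) e^{−γh} ( ⟨ξ_x, ∇²f(x_{1/2}) η_p⟩ − ⟨η_x, ∇²f(x_{1/2}) ξ_p⟩ ). In particular, Ψ is not conformal symplectic in general: the symplectic form is contracted by the extra Hessian-dependent term. -/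

import Mathlib

open scoped InnerProductSpace

/-- The standard symplectic form on `ℝⁿ × ℝⁿ`: `ω((a,b),(c,d)) = ⟨a,d⟩ − ⟨b,c⟩`. -/
noncomputable def sympForm {n : ℕ}
    (u v : EuclideanSpace ℝ (Fin n) × EuclideanSpace ℝ (Fin n)) : ℝ :=
  ⟪u.1, v.2⟫_ℝ - ⟪u.2, v.1⟫_ℝ

/-- Nesterov's accelerated gradient step in phase space:
`x_{1/2} = x + (h/m) e^{−γh} p`, `P = e^{−γh} p − h ∇f(x_{1/2})`,
`X = x + (h/m) P`. -/
noncomputable def nesterovStep {n : ℕ} (f : EuclideanSpace ℝ (Fin n) → ℝ) (m γ h : ℝ)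
    (z : EuclideanSpace ℝ (Fin n) × EuclideanSpace ℝ (Fin n)) :
    EuclideanSpace ℝ (Fin n) × EuclideanSpace ℝ (Fin n) :=
  let P := Real.exp (-γ * h) • z.2 - h • gradient f (z.1 + (h / m) • (Real.exp (-γ * h) • z.2))
  (z.1 + (h / m) • P, P)

/-- A `C²` function has a differentiable gradient, with self-adjoint derivative (the Hessian). -/
lemma gradient_hasFDerivAt_aux {n : ℕ} (f : EuclideanSpace ℝ (Fin n) → ℝ)
    (hf : ContDiff ℝ 2 f) (y : EuclideanSpace ℝ (Fin n)) :
    ∃ A : EuclideanSpace ℝ (Fin n) →L[ℝ] EuclideanSpace ℝ (Fin n),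
      HasFDerivAt (gradient f) A y ∧
      ∀ u v, ⟪A u, v⟫_ℝ = ⟪u, A v⟫_ℝ := by
  have hB : HasFDerivAt (fderiv ℝ f) (fderiv ℝ (fderiv ℝ f) y) y := by
    have h1 : ContDiff ℝ 1 (fderiv ℝ f) := hf.fderiv_right (by norm_num)
    exact (h1.differentiable one_ne_zero).differentiableAt.hasFDerivAt
  let A' : EuclideanSpace ℝ (Fin n) →ₗ[ℝ] EuclideanSpace ℝ (Fin n) :=
    { toFun := fun u =>
        (InnerProductSpace.toDual ℝ (EuclideanSpace ℝ (Fin n))).symm (fderiv ℝ (fderiv ℝ f) y u)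
      map_add' := by intro u v; simp
      map_smul' := by intro r u; simp }
  let A : EuclideanSpace ℝ (Fin n) →L[ℝ] EuclideanSpace ℝ (Fin n) :=
    LinearMap.toContinuousLinearMap A'
  have h1 : ∀ u v, ⟪A u, v⟫_ℝ = fderiv ℝ (fderiv ℝ f) y u v := by
    intro u v
    simp [A, A', LinearMap.toContinuousLinearMap, InnerProductSpace.toDual_symm_apply]
  refine ⟨A, ?_, ?_⟩
  · rw [hasFDerivAt_iff_isLittleO_nhds_zero] at hB ⊢
    have key : ∀ z, gradient f (y + z) - gradient f y - A z
        = (InnerProductSpace.toDual ℝ (EuclideanSpace ℝ (Fin n))).symm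
            (fderiv ℝ f (y + z) - fderiv ℝ f y - fderiv ℝ (fderiv ℝ f) y z) := by
      intro z
      simp [gradient, A, A', LinearMap.toContinuousLinearMap, map_sub]
    rw [← Asymptotics.isLittleO_norm_left]
    have heq : (fun z => ‖gradient f (y + z) - gradient f y - A z‖)
        = fun z => ‖fderiv ℝ f (y + z) - fderiv ℝ f y - fderiv ℝ (fderiv ℝ f) y z‖ := by
      funext z; rw [key, LinearIsometryEquiv.norm_map]
    rw [heq, Asymptotics.isLittleO_norm_left]
    exact hB
  · intro u v
    have hsym := (hf.contDiffAt (x := y)).isSymmSndFDerivAt (by simp [minSmoothness_of_isRCLikeNormedField])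
    rw [h1, hsym.eq u v, ← h1, real_inner_comm]

set_option maxHeartbeats 1000000 in
/-- Nesterov's step contracts the symplectic form with an extra
Hessian-dependent term; the exact identity is
`ω(DΨ ξ, DΨ η) = e^{−γh} ω(ξ,η) − (h²/m) e^{−γh} (⟨ξ_x, ∇²f(x_{1/2}) η_p⟩ − ⟨η_x, ∇²f(x_{1/2}) ξ_p⟩)`.
In particular Nesterov's method is not conformal symplectic in general. -/
theorem nesterov_symplectic_form_identity
    {n : ℕ} (f : EuclideanSpace ℝ (Fin n) → ℝ) (hf : ContDiff ℝ 2 f)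
    (m γ h : ℝ) (hm : 0 < m) (hγ : 0 ≤ γ) (hh : 0 < h) :
    ∀ (x p : EuclideanSpace ℝ (Fin n))
      (ξ η : EuclideanSpace ℝ (Fin n) × EuclideanSpace ℝ (Fin n)),
      sympForm (fderiv ℝ (nesterovStep f m γ h) (x, p) ξ)
          (fderiv ℝ (nesterovStep f m γ h) (x, p) η)
        = Real.exp (-γ * h) * sympForm ξ η
          - (h ^ 2 / m) * Real.exp (-γ * h) *
            (⟪ξ.1, fderiv ℝ (gradient f) (x + (h / m) • (Real.exp (-γ * h) • p)) η.2⟫_ℝ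
              - ⟪η.1, fderiv ℝ (gradient f) (x + (h / m) • (Real.exp (-γ * h) • p)) ξ.2⟫_ℝ) := by
  intro x p ξ η
  set c := Real.exp (-γ * h) with hc
  obtain ⟨A, hA, hsym⟩ := gradient_hasFDerivAt_aux f hf (x + (h / m) • (c • p))
  let L : (EuclideanSpace ℝ (Fin n) × EuclideanSpace ℝ (Fin n)) →L[ℝ] EuclideanSpace ℝ (Fin n) :=
    ContinuousLinearMap.fst ℝ _ _ + (h / m * c) • ContinuousLinearMap.snd ℝ _ _
  have hfun : (fun z : EuclideanSpace ℝ (Fin n) × EuclideanSpace ℝ (Fin n) =>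
      z.1 + (h / m) • (c • z.2)) = ⇑L := by
    funext z; simp [L, smul_smul]
  have hL : HasFDerivAt (fun z : EuclideanSpace ℝ (Fin n) × EuclideanSpace ℝ (Fin n) =>
      z.1 + (h / m) • (c • z.2)) L (x, p) := hfun ▸ L.hasFDerivAt
  have hgL : HasFDerivAt (fun z : EuclideanSpace ℝ (Fin n) × EuclideanSpace ℝ (Fin n) =>
      gradient f (z.1 + (h / m) • (c • z.2))) (A.comp L) (x, p) := by
    have := hA.comp (x, p) hL; exact this
  let DP : (EuclideanSpace ℝ (Fin n) × EuclideanSpace ℝ (Fin n)) →L[ℝ] EuclideanSpace ℝ (Fin n) :=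
    c • ContinuousLinearMap.snd ℝ _ _ - h • (A.comp L)
  have hP : HasFDerivAt (fun z : EuclideanSpace ℝ (Fin n) × EuclideanSpace ℝ (Fin n) =>
      c • z.2 - h • gradient f (z.1 + (h / m) • (c • z.2))) DP (x, p) :=
    (hasFDerivAt_snd.const_smul c).sub (hgL.const_smul h)
  let D : (EuclideanSpace ℝ (Fin n) × EuclideanSpace ℝ (Fin n)) →L[ℝ]
      (EuclideanSpace ℝ (Fin n) × EuclideanSpace ℝ (Fin n)) :=
    (ContinuousLinearMap.fst ℝ _ _ + (h / m) • DP).prod DP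
  have hΨ : HasFDerivAt (nesterovStep f m γ h) D (x, p) := by
    have := HasFDerivAt.prodMk (hasFDerivAt_fst.add (hP.const_smul (h / m))) hP
    exact this
  rw [hΨ.fderiv, hA.fderiv]
  -- notation
  set u1 := ξ.1; set u2 := ξ.2; set v1 := η.1; set v2 := η.2
  have hDξ : D ξ = (u1 + (h / m) • (c • u2 - h • A (u1 + (h / m * c) • u2)),
      c • u2 - h • A (u1 + (h / m * c) • u2)) := by
    simp [D, DP, L]; exact ⟨rfl, rfl⟩
  have hDη : D η = (v1 + (h / m) • (c • v2 - h • A (v1 + (h / m * c) • v2)),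
      c • v2 - h • A (v1 + (h / m * c) • v2)) := by
    simp [D, DP, L]; exact ⟨rfl, rfl⟩
  rw [hDξ, hDη]
  simp only [sympForm, map_add, map_smul, inner_add_left, inner_add_right, inner_sub_left,
    inner_sub_right, real_inner_smul_left, real_inner_smul_right]
  change _ = c * (⟪u1, v2⟫_ℝ - ⟪u2, v1⟫_ℝ) - _
  have c1 := hsym u1 v1
  have c2 := hsym u1 v2
  have c3 := hsym u2 v1
  have c4 := hsym u2 v2
  have d1 := real_inner_comm u1 v1
  have d2 := real_inner_comm (A u1) v1
  have d3 := real_inner_comm u2 v1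
  have d4 := real_inner_comm (A u2) v1
  have d5 := real_inner_comm u1 v2
  have d6 := real_inner_comm (A u1) v2
  have d7 := real_inner_comm u2 v2
  have d8 := real_inner_comm (A u2) v2
  have d9 := real_inner_comm (A u1) (A v1)
  have d10 := real_inner_comm (A u1) (A v2)
  have d11 := real_inner_comm (A u2) (A v1)
  have d12 := real_inner_comm (A u2) (A v2)
  linear_combination (norm := ring_nf) h * c1 - c * h ^ 2 * m⁻¹ * d4
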